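/- Let X be a real reflexive Banach space, f : X → ℝ fully Legendre, A : X → 2^{X*} maximally monotone, and λ > 0 such that (∇f + λA)⁻¹ is single-valued and continuous and ∇f is continuous. For each (x, η) ∈ X × X*, let (ỹ(x,η), ξ̃(x,η)) denote the unique solution of ξ ∈ A(y), η = ξ + (1/λ)(∇f(y) − ∇f(x)). Then the maps (x,η) ↦ ỹ(x,η) and (x,η) ↦ ξ̃(x,η) are continuous, given explicitly by ỹ(x,η) = (∇f + λA)⁻¹(λη + ∇f(x)) and ξ̃(x,η) = η − (1/λ)(∇f(ỹ(x,η)) − ∇f(x)). -/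

import Mathlib

/-- (Continuous dependence on the data of the inexact
resolvent inclusion problem.) Let `X` be a real reflexive Banach space,
`f : X → ℝ` fully Legendre with `∇f = g` continuous, `A` maximally monotone,
`λ > 0`, and suppose `(∇f + λA)⁻¹ = R` is single-valued and continuous. Then
the unique solution `(ỹ(x,η), ξ̃(x,η))` of `ξ ∈ A(y)`,
`η = ξ + (1/λ)(∇f(y) − ∇f(x))` is given by `ỹ(x,η) = R(λη + ∇f(x))`,
`ξ̃(x,η) = η − (1/λ)(∇f(ỹ) − ∇f(x))`, and both maps are continuous in
`(x, η)`. -/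
theorem inexact_resolvent_solution_continuous_dependence
    {X : Type*} [NormedAddCommGroup X] [NormedSpace ℝ X] [CompleteSpace X]
    (hrefl : Function.Surjective (NormedSpace.inclusionInDoubleDual ℝ X))
    (f : X → ℝ) (hconv : ConvexOn ℝ Set.univ f) (hlsc : LowerSemicontinuous f)
    (g : X → StrongDual ℝ X)
    (hg : ∀ x v, HasLineDerivAt ℝ f (g x v) x v)
    (hgcont : Continuous g)
    (fstar : StrongDual ℝ X → ℝ)
    (hfstar : ∀ p, IsLUB (Set.range fun x => p x - f x) (fstar p))
    (gstar : StrongDual ℝ X → X)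
    (hgstar : ∀ p q, HasLineDerivAt ℝ fstar (q (gstar p)) p q)
    (A : X → Set (StrongDual ℝ X))
    (hmono : ∀ x1 x2 u1 u2, u1 ∈ A x1 → u2 ∈ A x2 → 0 ≤ (u1 - u2) (x1 - x2))
    (hmax : ∀ y v, (∀ x u, u ∈ A x → 0 ≤ (v - u) (y - x)) → v ∈ A y)
    (lam : ℝ) (hlam : 0 < lam)
    (R : StrongDual ℝ X → X)
    (hR : ∀ w y, (∃ a ∈ A y, w = g y + lam • a) ↔ y = R w)
    (hRcont : Continuous R)
    (ytil : X × StrongDual ℝ X → X)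
    (hytil : ∀ p, ytil p = R (lam • p.2 + g p.1))
    (xitil : X × StrongDual ℝ X → StrongDual ℝ X)
    (hxitil : ∀ p, xitil p = p.2 - lam⁻¹ • (g (ytil p) - g p.1)) :
    Continuous ytil ∧ Continuous xitil ∧
    (∀ x η, xitil (x, η) ∈ A (ytil (x, η)) ∧
      η = xitil (x, η) + lam⁻¹ • (g (ytil (x, η)) - g x)) ∧
    (∀ x η y ξ, ξ ∈ A y → η = ξ + lam⁻¹ • (g y - g x) →
      y = ytil (x, η) ∧ ξ = xitil (x, η)) := by
  have hlam' : lam ≠ 0 := ne_of_gt hlam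
  have hycont : Continuous ytil := by
    have : ytil = fun p => R (lam • p.2 + g p.1) := funext hytil
    rw [this]
    exact hRcont.comp (show Continuous fun p : X × StrongDual ℝ X => lam • p.2 + g p.1 by
      fun_prop)
  have hxcont : Continuous xitil := by
    have : xitil = fun p => p.2 - lam⁻¹ • (g (ytil p) - g p.1) := funext hxitil
    rw [this]
    exact continuous_snd.sub (show Continuous fun p => lam⁻¹ • (g (ytil p) - g p.1) by
      fun_prop)
  refine ⟨hycont, hxcont, ?_, ?_⟩
  · intro x η
    have h1 : ytil (x, η) = R (lam • η + g x) := hytil _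
    obtain ⟨a, ha, hw⟩ := (hR (lam • η + g x) (ytil (x, η))).mpr h1
    have h2 : a = xitil (x, η) := by
      rw [hxitil]
      have h3 : lam • a = lam • η + g x - g (ytil (x, η)) :=
        eq_sub_iff_add_eq.mpr (by rw [add_comm]; exact hw.symm)
      calc a = lam⁻¹ • (lam • a) := (inv_smul_smul₀ hlam' a).symm
        _ = lam⁻¹ • (lam • η + g x - g (ytil (x, η))) := by rw [h3]
        _ = η - lam⁻¹ • (g (ytil (x, η)) - g x) := by
            match_scalars <;> field_simp
    constructor
    · rw [← h2]; exact ha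
    · rw [hxitil]; abel
  · intro x η y ξ hξ hη
    have hw : lam • η + g x = g y + lam • ξ := by
      rw [hη]; match_scalars <;> field_simp <;> ring
    have hy : y = R (lam • η + g x) := (hR _ _).mp ⟨ξ, hξ, hw⟩
    have hy' : y = ytil (x, η) := by rw [hytil]; exact hy
    refine ⟨hy', ?_⟩
    rw [hxitil, ← hy', hη]
    module
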